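/- For all real numbers x, y and real z with 0 < |z| < 1/8, there exists an absolute constant D > 0 (independent of x, y, z) such that 1 + z·cos(x+y) ≥ exp(−(z·sin x·sin y)/(1 + z·cos x) − D·|z|·y²) · (1 + z·cos x). -/

import Mathlib

open Real

set_option maxHeartbeats 1000000

lemma exp_le_quad {s : ℝ} (h : |s| ≤ 1/7) : Real.exp s ≤ 1 + s + s^2 := by
  have h1 : |s| ≤ 1 := h.trans (by norm_num)
  have hb := Real.exp_bound h1 (n := 2) (by norm_num)
  rw [Finset.sum_range_succ, Finset.sum_range_succ, Finset.sum_range_zero] at hb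
  norm_num [Nat.factorial] at hb
  have habs := abs_le.mp hb
  have hsq : |s|^2 = s^2 := sq_abs s
  nlinarith [sq_nonneg s]

theorem stmt0 :
    ∃ D : ℝ, 0 < D ∧ ∀ x y z : ℝ, 0 < |z| → |z| < 1/8 →
      Real.exp (-(z * Real.sin x * Real.sin y) / (1 + z * Real.cos x) - D * |z| * y ^ 2) *
          (1 + z * Real.cos x) ≤ 1 + z * Real.cos (x + y) := by
  refine ⟨100, by norm_num, fun x y z hz0 hz8 => ?_⟩
  set c : ℝ := 1 + z * Real.cos x with hcdef
  have hzc : |z * Real.cos x| ≤ |z| := by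
    rw [abs_mul]
    calc |z| * |Real.cos x| ≤ |z| * 1 :=
          mul_le_mul_of_nonneg_left (abs_cos_le_one x) (abs_nonneg z)
      _ = |z| := mul_one _
  have hzcb := abs_le.mp hzc
  have hc : (7:ℝ)/8 ≤ c := by rw [hcdef]; linarith
  have hc0 : (0:ℝ) < c := by linarith
  set A : ℝ := z * Real.sin x * Real.sin y / c with hAdef
  set B : ℝ := z * Real.cos x * (1 - Real.cos y) / c with hBdef
  set M : ℝ := 100 * |z| * y^2 with hMdef
  have hM : 0 ≤ M := by rw [hMdef]; positivity
  have hzsin : |z * Real.sin x * Real.sin y| ≤ |z| * |Real.sin y| := by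
    rw [abs_mul, abs_mul]
    have h1 : |z| * |Real.sin x| ≤ |z| * 1 :=
      mul_le_mul_of_nonneg_left (abs_sin_le_one x) (abs_nonneg z)
    nlinarith [abs_nonneg (Real.sin y)]
  have hA : |A| ≤ 1/7 := by
    rw [hAdef, abs_div, abs_of_pos hc0, div_le_iff₀ hc0]
    have := abs_sin_le_one y
    nlinarith [abs_nonneg (Real.sin y)]
  have hsy : |Real.sin y| ≤ |y| := Real.abs_sin_le_abs
  have hcc : (49:ℝ)/64 ≤ c^2 := by nlinarith
  have hA2 : A^2 ≤ 8/49 * (|z| * y^2) := by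
    rw [hAdef, div_pow, div_le_iff₀ (by positivity)]
    have hz1 : |z * Real.sin x * Real.sin y| ≤ |z| * |y| :=
      hzsin.trans (mul_le_mul_of_nonneg_left hsy (abs_nonneg z))
    have h1 : (z * Real.sin x * Real.sin y)^2 ≤ |z|^2 * y^2 := by
      have := sq_le_sq' (neg_le_of_abs_le hz1) (le_of_abs_le hz1)
      calc (z * Real.sin x * Real.sin y)^2 ≤ (|z| * |y|)^2 := this
        _ = |z|^2 * y^2 := by rw [mul_pow, sq_abs, sq_abs]
    have h2 : |z|^2 ≤ |z| * (1/8) := by nlinarith [abs_nonneg z]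
    nlinarith [mul_nonneg (abs_nonneg z) (sq_nonneg y), sq_nonneg y]
  have hcos2 : 0 ≤ 1 - Real.cos y := by linarith [Real.cos_le_one y]
  have hcosy : 1 - Real.cos y ≤ y^2/2 := by linarith [Real.one_sub_sq_div_two_le_cos (x := y)]
  have hcosy2 : 1 - Real.cos y ≤ 2 := by linarith [Real.neg_one_le_cos y]
  have hnum : |z * Real.cos x * (1 - Real.cos y)| ≤ |z| * (1 - Real.cos y) := by
    rw [abs_mul, abs_of_nonneg hcos2]
    exact mul_le_mul_of_nonneg_right hzc hcos2
  have hBabs : |B| ≤ |z| * (1 - Real.cos y) / c := by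
    rw [hBdef, abs_div, abs_of_pos hc0]
    gcongr
  have hB1 : |B| ≤ 2/7 := by
    refine hBabs.trans ?_
    rw [div_le_iff₀ hc0]
    nlinarith [abs_nonneg z]
  have hB2 : |B| ≤ 4/7 * (|z| * y^2) := by
    refine hBabs.trans ?_
    rw [div_le_iff₀ hc0]
    nlinarith [abs_nonneg z, sq_nonneg y]
  have hid : 1 + z * Real.cos (x + y) = c * (1 - A - B) := by
    rw [Real.cos_add, hAdef, hBdef, hcdef]
    have hc1 : (1 + z * Real.cos x) ≠ 0 := ne_of_gt (by linarith)
    field_simp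
    ring
  have hgoal_eq : -(z * Real.sin x * Real.sin y) / (1 + z * Real.cos x) - 100 * |z| * y ^ 2
      = -A - M := by rw [hAdef, hMdef, hcdef, neg_div]
  rw [hgoal_eq, hid]
  have e1 : Real.exp (-A) ≤ 1 - A + A^2 := by
    have h := exp_le_quad (s := -A) (by rwa [abs_neg])
    have : (-A)^2 = A^2 := by ring
    linarith
  have e2 : Real.exp (-A - M) * (1 + M) ≤ Real.exp (-A) := by
    calc Real.exp (-A - M) * (1 + M) ≤ Real.exp (-A - M) * Real.exp M :=
          mul_le_mul_of_nonneg_left (by linarith [Real.add_one_le_exp M]) (Real.exp_pos _).le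
      _ = Real.exp (-A) := by rw [← Real.exp_add]; ring_nf
  have e3 : 1 - A + A^2 ≤ (1 - A - B) * (1 + M) := by
    obtain ⟨hA1, hA1'⟩ := abs_le.mp hA
    obtain ⟨hB1a, hB1b⟩ := abs_le.mp hB1
    obtain ⟨hB2a, hB2b⟩ := abs_le.mp hB2
    nlinarith [mul_nonneg (by linarith : (0:ℝ) ≤ 1/7 - A) hM,
      mul_nonneg (by linarith : (0:ℝ) ≤ 2/7 - B) hM, hM, hMdef, hA2,
      mul_nonneg (abs_nonneg z) (sq_nonneg y)]
  have e4 : Real.exp (-A - M) * (1 + M) ≤ (1 - A - B) * (1 + M) :=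
    e2.trans (e1.trans e3)
  have e5 : Real.exp (-A - M) ≤ 1 - A - B :=
    le_of_mul_le_mul_right (by linarith [e4]) (by linarith : (0:ℝ) < 1 + M)
  calc Real.exp (-A - M) * c ≤ (1 - A - B) * c :=
        mul_le_mul_of_nonneg_right e5 hc0.le
    _ = c * (1 - A - B) := mul_comm _ _
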